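/- arXiv:2504.18895 — 3 statements merged into one kernel-verified Lean document; each statement's English description precedes it below -/
import Mathlib

section
/- Let Ω ⊆ ℝ^d be an open set. Let 𝒢²(Ω) denote the closure in L²(Ω;ℂ^d) of { (∇φ)|_Ω : φ ∈ C_c^∞(ℝ^d;ℂ) }, and let 𝒫 denote the orthogonal projection of L²(Ω;ℂ^d) onto the orthogonal complement 𝒢²(Ω)^⊥. If u ∈ D(−Δ_H), then 𝒫u ∈ D(−Δ_H) and −Δ_H(𝒫u) = 𝒫(−Δ_H u). -/
open MeasureTheory Complex Filter Topology
open scoped BigOperators ComplexConjugate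

noncomputable section
attribute [local instance] Classical.propDecidable
set_option maxHeartbeats 1000000

/-- The domain `ℝ^d`. -/
abbrev Edom (d : ℕ) := EuclideanSpace ℝ (Fin d)

/-- The codomain `ℂ^d`. -/
abbrev Fcod (d : ℕ) := EuclideanSpace ℂ (Fin d)

/-- Lebesgue measure restricted to `Ω`. -/
def muOm (d : ℕ) (Ω : Set (Edom d)) : Measure (Edom d) := volume.restrict Ω

/-- The Hilbert space `L²(Ω; ℂ^d)`. -/
abbrev Hsp (d : ℕ) (Ω : Set (Edom d)) := Lp (Fcod d) 2 (muOm d Ω)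

/-- The `j`-th partial derivative of a scalar function. -/
def pd {d : ℕ} (j : Fin d) (φ : Edom d → ℂ) (x : Edom d) : ℂ :=
  fderiv ℝ φ x (EuclideanSpace.single j 1)

/-- Test functions compactly supported in `Ω`. -/
def IsTest {d : ℕ} (Ω : Set (Edom d)) (φ : Edom d → ℂ) : Prop :=
  ContDiff ℝ (⊤ : ℕ∞) φ ∧ HasCompactSupport φ ∧ tsupport φ ⊆ Ω

/-- Condition (i): `g` is the distributional entry `(D_-(u))_{jk} = ∂_j u_k - ∂_k u_j` and
it lies in `L²(Ω)`. -/
def CondRot {d : ℕ} (Ω : Set (Edom d)) (u : Edom d → Fcod d) (j k : Fin d)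
    (g : Edom d → ℂ) : Prop :=
  MemLp g 2 (muOm d Ω) ∧ ∀ φ : Edom d → ℂ, IsTest Ω φ →
    ∫ x, (u x k * pd j φ x - u x j * pd k φ x) ∂(muOm d Ω)
      = - ∫ x, g x * φ x ∂(muOm d Ω)

/-- Condition (ii): `h = div u ∈ L²(Ω)` distributionally, tested against all of
`C_c^∞(ℝ^d)` (which also encodes the vanishing of the normal trace `ν·u` on `∂Ω`). -/
def CondDiv {d : ℕ} (Ω : Set (Edom d)) (u : Edom d → Fcod d) (h : Edom d → ℂ) : Prop :=
  MemLp h 2 (muOm d Ω) ∧ ∀ φ : Edom d → ℂ, ContDiff ℝ (⊤ : ℕ∞) φ → HasCompactSupport φ →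
    ∫ x, (∑ j, u x j * pd j φ x) ∂(muOm d Ω) = - ∫ x, h x * φ x ∂(muOm d Ω)

/-- Membership in the form domain `V(Ω)`. -/
def memV {d : ℕ} (Ω : Set (Edom d)) (u : Hsp d Ω) : Prop :=
  (∀ j k : Fin d, ∃ g, CondRot Ω (⇑u) j k g) ∧ (∃ h, CondDiv Ω (⇑u) h)

/-- A choice of the distributional entry `(D_-(u))_{jk}` (zero junk value otherwise). -/
def gch {d : ℕ} (Ω : Set (Edom d)) (u : Hsp d Ω) (j k : Fin d) : Edom d → ℂ :=
  if hg : ∃ g, CondRot Ω (⇑u) j k g then hg.choose else 0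

/-- A choice of the distributional divergence of `u` (zero junk value otherwise). -/
def hch {d : ℕ} (Ω : Set (Edom d)) (u : Hsp d Ω) : Edom d → ℂ :=
  if hh : ∃ h, CondDiv Ω (⇑u) h then hh.choose else 0

/-- The sesquilinear form
`a(u,v) = (1/2) ∑_{j,k} ∫_Ω g^u_{jk} conj (g^v_{jk}) + ∫_Ω h_u conj (h_v)`. -/
def formA {d : ℕ} (Ω : Set (Edom d)) (u v : Hsp d Ω) : ℂ :=
  (1 / 2 : ℂ) * (∑ j : Fin d, ∑ k : Fin d,
      ∫ x, gch Ω u j k x * conj (gch Ω v j k x) ∂(muOm d Ω))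
    + ∫ x, hch Ω u x * conj (hch Ω v x) ∂(muOm d Ω)

/-- The `L²(Ω;ℂ^d)` pairing `⟨f, v⟩ = ∫_Ω f · conj v` (linear in the first argument). -/
def L2inner {d : ℕ} (Ω : Set (Edom d)) (f v : Hsp d Ω) : ℂ :=
  ∫ x, (∑ k, f x k * conj (v x k)) ∂(muOm d Ω)

/-- Membership in `D(-Δ_H)`. -/
def memD {d : ℕ} (Ω : Set (Edom d)) (u : Hsp d Ω) : Prop :=
  memV Ω u ∧ ∃ f : Hsp d Ω, ∀ v : Hsp d Ω, memV Ω v → formA Ω u v = L2inner Ω f v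

/-- The Hodge Laplacian `-Δ_H` (with zero junk value off the domain). -/
def HLap {d : ℕ} (Ω : Set (Edom d)) (u : Hsp d Ω) : Hsp d Ω :=
  if h : memD Ω u then h.2.choose else 0


/-- The set of (L²-classes of) gradients `(∇φ)|_Ω` of test functions `φ ∈ C_c^∞(ℝ^d;ℂ)`;
its closure in `L²(Ω;ℂ^d)` is the gradient space `𝒢²(Ω)`. -/
def gradTest (d : ℕ) (Ω : Set (Edom d)) : Set (Hsp d Ω) :=
  {u : Hsp d Ω | ∃ φ : Edom d → ℂ, ContDiff ℝ (⊤ : ℕ∞) φ ∧ HasCompactSupport φ ∧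
    ⇑u =ᵐ[muOm d Ω] fun x => (WithLp.toLp 2 (fun j => pd j φ x) : Fcod d)}

/-! ### Auxiliary development -/

section Aux

variable {d : ℕ} {Ω : Set (Edom d)}

instance : IsFiniteMeasureOnCompacts (muOm d Ω) :=
  inferInstanceAs (IsFiniteMeasureOnCompacts (volume.restrict Ω))

instance : IsLocallyFiniteMeasure (muOm d Ω) :=
  inferInstanceAs (IsLocallyFiniteMeasure (volume.restrict Ω))

lemma infty_le : ((⊤ : ℕ∞) : WithTop ℕ∞) + 1 ≤ ((⊤ : ℕ∞) : WithTop ℕ∞) := by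
  rw [← WithTop.coe_one, ← WithTop.coe_add]
  exact WithTop.coe_le_coe.2 (by simp)

lemma one_le_infty : (1 : WithTop ℕ∞) ≤ ((⊤ : ℕ∞) : WithTop ℕ∞) := by
  rw [← WithTop.coe_one]
  exact WithTop.coe_le_coe.2 (by simp)

lemma pd_smooth {φ : Edom d → ℂ} (hφ : ContDiff ℝ (⊤ : ℕ∞) φ) (j : Fin d) :
    ContDiff ℝ (⊤ : ℕ∞) (pd j φ) :=
  (hφ.fderiv_right infty_le).clm_apply contDiff_const

lemma pd_continuous {φ : Edom d → ℂ} (hφ : ContDiff ℝ (⊤ : ℕ∞) φ) (j : Fin d) :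
    Continuous (pd j φ) := (pd_smooth hφ j).continuous

lemma tsupport_pd_subset (φ : Edom d → ℂ) (j : Fin d) : tsupport (pd j φ) ⊆ tsupport φ := by
  refine subset_trans (closure_mono ?_) (tsupport_fderiv_subset ℝ (f := φ))
  intro x hx
  simp only [Function.mem_support] at hx ⊢
  intro h; apply hx; simp [pd, h]

lemma pd_eq_zero_of_nmem {φ : Edom d → ℂ} {x : Edom d} (hx : x ∉ tsupport φ) (j : Fin d) :
    pd j φ x = 0 :=
  image_eq_zero_of_notMem_tsupport (fun h => hx (tsupport_pd_subset φ j h))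

lemma pd_hasCompactSupport {φ : Edom d → ℂ} (hφ : HasCompactSupport φ) (j : Fin d) :
    HasCompactSupport (pd j φ) :=
  hφ.isCompact.of_isClosed_subset isClosed_closure (tsupport_pd_subset φ j)

lemma pd_conj {φ : Edom d → ℂ} (hφ : ContDiff ℝ (⊤ : ℕ∞) φ) (j : Fin d) (x : Edom d) :
    pd j (fun y => conj (φ y)) x = conj (pd j φ x) := by
  have hd : HasFDerivAt φ (fderiv ℝ φ x) x :=
    (hφ.differentiable (by simp) x).hasFDerivAt
  have h2 := ((RCLike.conjCLE (K := ℂ)).toContinuousLinearMap.hasFDerivAt (x := φ x)).comp x hd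
  have h3 : (fun y => conj (φ y)) = ⇑(RCLike.conjCLE (K := ℂ)).toContinuousLinearMap ∘ φ := by
    funext y; simp [RCLike.conjCLE_apply]
  rw [pd, h3, h2.fderiv]
  simp [pd, RCLike.conjCLE_apply]

lemma isTest_conj {φ : Edom d → ℂ} (hφ : IsTest Ω φ) : IsTest Ω (fun y => conj (φ y)) := by
  obtain ⟨h1, h2, h3⟩ := hφ
  refine ⟨?_, ?_, ?_⟩
  · have h : (fun y => conj (φ y))
        = fun y => (RCLike.conjCLE (K := ℂ)).toContinuousLinearMap (φ y) := by
      funext y; simp [RCLike.conjCLE_apply]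
    rw [h]
    exact (RCLike.conjCLE (K := ℂ)).toContinuousLinearMap.contDiff.comp h1
  · simpa [Function.comp_def] using h2.comp_left (g := conj) (by simp)
  · have hsub : Function.support (fun y => conj (φ y)) ⊆ Function.support φ := by
      intro x hx
      rw [Function.mem_support] at hx ⊢
      intro h0
      apply hx
      rw [h0, map_zero]
    exact subset_trans (closure_mono hsub) h3

/-- Integration by parts on `ℝ^d`. -/
lemma integral_pd_mul {f g : Edom d → ℂ} (hf : ContDiff ℝ (⊤ : ℕ∞) f)
    (hg : ContDiff ℝ (⊤ : ℕ∞) g) (hs : HasCompactSupport f ∨ HasCompactSupport g) (j : Fin d) :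
    ∫ x, f x * pd j g x = - ∫ x, pd j f x * g x := by
  have hfc := hf.continuous
  have hgc := hg.continuous
  have hpf := pd_continuous hf j
  have hpg := pd_continuous hg j
  have H1 : HasCompactSupport (fun x => pd j f x * g x) := by
    rcases hs with h | h
    · exact (pd_hasCompactSupport h j).mul_right
    · exact h.mul_left
  have H2 : HasCompactSupport (fun x => f x * pd j g x) := by
    rcases hs with h | h
    · exact h.mul_right
    · exact (pd_hasCompactSupport h j).mul_left
  have H3 : HasCompactSupport (fun x => f x * g x) := by
    rcases hs with h | h
    · exact h.mul_right
    · exact h.mul_left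
  exact integral_mul_fderiv_eq_neg_fderiv_mul_of_integrable
    ((hpf.mul hgc).integrable_of_hasCompactSupport H1)
    ((hfc.mul hpg).integrable_of_hasCompactSupport H2)
    ((hfc.mul hgc).integrable_of_hasCompactSupport H3)
    (fun x _ => hf.differentiable (by simp) x) (fun x _ => hg.differentiable (by simp) x)

/-- Schwarz symmetry of second derivatives. -/
lemma pd_comm {ψ : Edom d → ℂ} (hψ : ContDiff ℝ (⊤ : ℕ∞) ψ) (j k : Fin d) (x : Edom d) :
    pd j (pd k ψ) x = pd k (pd j ψ) x := by
  have hdiff : ∀ y, HasFDerivAt ψ (fderiv ℝ ψ y) y := fun y =>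
    (hψ.differentiable (by simp) y).hasFDerivAt
  have hd2 : HasFDerivAt (fderiv ℝ ψ) (fderiv ℝ (fderiv ℝ ψ) x) x :=
    (((hψ.fderiv_right infty_le).differentiable (by simp)) x).hasFDerivAt
  have hsymm := second_derivative_symmetric hdiff hd2
  have key : ∀ m n : Fin d, pd m (pd n ψ) x
      = fderiv ℝ (fderiv ℝ ψ) x (EuclideanSpace.single m 1) (EuclideanSpace.single n 1) := by
    intro m n
    have hc : DifferentiableAt ℝ (fderiv ℝ ψ) x :=
      ((hψ.fderiv_right infty_le).differentiable (by simp)) x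
    have : pd n ψ = fun y => (fderiv ℝ ψ y) (EuclideanSpace.single n 1) := rfl
    rw [pd, this, fderiv_clm_apply hc (differentiableAt_const _)]
    simp
  rw [key j k, key k j, hsymm]

/-- `L²` functions agreeing against all test functions agree a.e. -/
lemma ae_eq_zero_of_integral_test (hΩ : IsOpen Ω) {f : Edom d → ℂ}
    (hf : MemLp f 2 (muOm d Ω))
    (h : ∀ φ : Edom d → ℂ, IsTest Ω φ → ∫ x, f x * φ x ∂(muOm d Ω) = 0) :
    f =ᵐ[muOm d Ω] 0 := by
  have hli : LocallyIntegrableOn f Ω volume := by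
    apply locallyIntegrableOn_of_locallyIntegrable_restrict
    have := hf.locallyIntegrable (μ := muOm d Ω) one_le_two
    exact this
  have key := hΩ.ae_eq_zero_of_integral_contDiff_smul_eq_zero (μ := volume) hli ?_
  · have hmu : muOm d Ω = volume.restrict Ω := rfl
    rw [hmu, Filter.EventuallyEq, ae_restrict_iff' hΩ.measurableSet]
    filter_upwards [key] with x hx hmem
    simpa using hx hmem
  · intro g hg1 hg2 hg3
    have hgt : IsTest Ω (fun x => (g x : ℂ)) := by
      refine ⟨Complex.ofRealCLM.contDiff.comp hg1, ?_, ?_⟩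
      · simpa [Function.comp_def] using hg2.comp_left (g := fun r : ℝ => (r : ℂ)) (by simp)
      · refine subset_trans (closure_mono ?_) hg3
        exact Function.support_comp_subset (g := fun r : ℝ => (r : ℂ)) (by simp) g
    have h0 := h _ hgt
    have hvan : ∀ x ∉ Ω, g x • f x = 0 := by
      intro x hx
      have : g x = 0 := image_eq_zero_of_notMem_tsupport (fun hmem => hx (hg3 hmem))
      simp [this]
    have hmu : muOm d Ω = volume.restrict Ω := rfl
    rw [← setIntegral_eq_integral_of_forall_compl_eq_zero hvan, ← hmu, ← h0]
    apply integral_congr_ae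
    filter_upwards with x
    rw [Complex.real_smul, mul_comm]

lemma memℒp_coord (u : Hsp d Ω) (k : Fin d) : MemLp (fun x => u x k) 2 (muOm d Ω) :=
  (EuclideanSpace.proj k : Fcod d →L[ℂ] ℂ).comp_memLp' (Lp.memLp u)

lemma integrable_mul_L2 {a b : Edom d → ℂ} (ha : MemLp a 2 (muOm d Ω))
    (hb : MemLp b 2 (muOm d Ω)) : Integrable (fun x => a x * b x) (muOm d Ω) := by
  rw [← memLp_one_iff_integrable]
  have h121 : (1 : ENNReal) / 1 = 1 / 2 + 1 / 2 := by
    rw [ENNReal.add_halves]; norm_num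
  have := hb.smul (φ := a) ha (p := 2) (q := 2) (r := 1)
  exact this

lemma memℒp_of_test {φ : Edom d → ℂ} (hc : Continuous φ) (hs : HasCompactSupport φ) :
    MemLp φ 2 (muOm d Ω) :=
  hc.memLp_of_hasCompactSupport hs

lemma ae_eq_of_integral_test (hΩ : IsOpen Ω) {f g : Edom d → ℂ}
    (hf : MemLp f 2 (muOm d Ω)) (hg : MemLp g 2 (muOm d Ω))
    (h : ∀ φ : Edom d → ℂ, IsTest Ω φ →
      ∫ x, f x * φ x ∂(muOm d Ω) = ∫ x, g x * φ x ∂(muOm d Ω)) :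
    f =ᵐ[muOm d Ω] g := by
  have hsub : (fun x => f x - g x) =ᵐ[muOm d Ω] 0 := by
    apply ae_eq_zero_of_integral_test hΩ (hf.sub hg)
    intro φ hφt
    have hφ2 : MemLp φ 2 (muOm d Ω) := memℒp_of_test hφt.1.continuous hφt.2.1
    have h1 : Integrable (fun x => f x * φ x) (muOm d Ω) := integrable_mul_L2 hf hφ2
    have h2 : Integrable (fun x => g x * φ x) (muOm d Ω) := integrable_mul_L2 hg hφ2
    have heq : (fun x => (f - g) x * φ x) = fun x => f x * φ x - g x * φ x := by
      funext x; simp only [Pi.sub_apply]; ring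
    rw [heq, integral_sub h1 h2, h φ hφt, sub_self]
  filter_upwards [hsub] with x hx
  have hx2 : f x - g x = 0 := by simpa using hx
  exact sub_eq_zero.mp hx2


lemma condRot_ae_unique (hΩ : IsOpen Ω) {u : Edom d → Fcod d} {j k : Fin d}
    {g g' : Edom d → ℂ} (h : CondRot Ω u j k g) (h' : CondRot Ω u j k g') :
    g =ᵐ[muOm d Ω] g' := by
  apply ae_eq_of_integral_test hΩ h.1 h'.1
  intro φ hφ
  have := (h.2 φ hφ).symm.trans (h'.2 φ hφ)
  exact neg_inj.mp this

lemma condDiv_ae_unique (hΩ : IsOpen Ω) {u : Edom d → Fcod d}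
    {h h' : Edom d → ℂ} (hh : CondDiv Ω u h) (hh' : CondDiv Ω u h') :
    h =ᵐ[muOm d Ω] h' := by
  apply ae_eq_of_integral_test hΩ hh.1 hh'.1
  intro φ hφ
  have := (hh.2 φ hφ.1 hφ.2.1).symm.trans (hh'.2 φ hφ.1 hφ.2.1)
  exact neg_inj.mp this

lemma condRot_congr {u v : Edom d → Fcod d} {j k : Fin d} {g : Edom d → ℂ}
    (h : CondRot Ω u j k g) (huv : u =ᵐ[muOm d Ω] v) : CondRot Ω v j k g := by
  refine ⟨h.1, fun φ hφ => ?_⟩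
  rw [← h.2 φ hφ]
  apply integral_congr_ae
  filter_upwards [huv] with x hx
  rw [hx]

lemma condDiv_congr {u v : Edom d → Fcod d} {g : Edom d → ℂ}
    (h : CondDiv Ω u g) (huv : u =ᵐ[muOm d Ω] v) : CondDiv Ω v g := by
  refine ⟨h.1, fun φ h1 h2 => ?_⟩
  rw [← h.2 φ h1 h2]
  apply integral_congr_ae
  filter_upwards [huv] with x hx
  rw [hx]

lemma condRot_sub (A B : Hsp d Ω) {j k : Fin d} {g1 g2 : Edom d → ℂ}
    (ha : CondRot Ω (⇑A) j k g1) (hb : CondRot Ω (⇑B) j k g2) :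
    CondRot Ω (⇑(A - B)) j k (fun x => g1 x - g2 x) := by
  obtain ⟨hg1, hi1⟩ := ha
  obtain ⟨hg2, hi2⟩ := hb
  refine ⟨hg1.sub hg2, fun φ hφ => ?_⟩
  have hφ0 : MemLp φ 2 (muOm d Ω) := memℒp_of_test hφ.1.continuous hφ.2.1
  have hφj : MemLp (pd j φ) 2 (muOm d Ω) :=
    memℒp_of_test (pd_continuous hφ.1 j) (pd_hasCompactSupport hφ.2.1 j)
  have hφk : MemLp (pd k φ) 2 (muOm d Ω) :=
    memℒp_of_test (pd_continuous hφ.1 k) (pd_hasCompactSupport hφ.2.1 k)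
  have iA1 : Integrable (fun x => A x k * pd j φ x) (muOm d Ω) :=
    integrable_mul_L2 (memℒp_coord A k) hφj
  have iA2 : Integrable (fun x => A x j * pd k φ x) (muOm d Ω) :=
    integrable_mul_L2 (memℒp_coord A j) hφk
  have iB1 : Integrable (fun x => B x k * pd j φ x) (muOm d Ω) :=
    integrable_mul_L2 (memℒp_coord B k) hφj
  have iB2 : Integrable (fun x => B x j * pd k φ x) (muOm d Ω) :=
    integrable_mul_L2 (memℒp_coord B j) hφk
  have ig1 : Integrable (fun x => g1 x * φ x) (muOm d Ω) := integrable_mul_L2 hg1 hφ0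
  have ig2 : Integrable (fun x => g2 x * φ x) (muOm d Ω) := integrable_mul_L2 hg2 hφ0
  have hL : ∫ x, ((A - B) x k * pd j φ x - (A - B) x j * pd k φ x) ∂(muOm d Ω)
      = ∫ x, ((A x k * pd j φ x - A x j * pd k φ x)
          - (B x k * pd j φ x - B x j * pd k φ x)) ∂(muOm d Ω) := by
    apply integral_congr_ae
    filter_upwards [Lp.coeFn_sub A B] with x hx
    have h1 : ((A - B : Hsp d Ω) x) k = A x k - B x k := by rw [hx]; rfl
    have h2 : ((A - B : Hsp d Ω) x) j = A x j - B x j := by rw [hx]; rfl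
    rw [h1, h2]; ring
  have iFA : Integrable (fun x => A x k * pd j φ x - A x j * pd k φ x) (muOm d Ω) :=
    iA1.sub iA2
  have iFB : Integrable (fun x => B x k * pd j φ x - B x j * pd k φ x) (muOm d Ω) :=
    iB1.sub iB2
  have hR : ∫ x, (g1 x - g2 x) * φ x ∂(muOm d Ω)
      = (∫ x, g1 x * φ x ∂(muOm d Ω)) - ∫ x, g2 x * φ x ∂(muOm d Ω) := by
    have h' := integral_sub ig1 ig2
    rw [← h']
    congr 1; funext x; ring
  calc ∫ x, ((A - B : Hsp d Ω) x k * pd j φ x - (A - B : Hsp d Ω) x j * pd k φ x) ∂(muOm d Ω)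
      = (∫ x, (A x k * pd j φ x - A x j * pd k φ x) ∂(muOm d Ω))
        - ∫ x, (B x k * pd j φ x - B x j * pd k φ x) ∂(muOm d Ω) := by
        rw [hL]; exact integral_sub iFA iFB
    _ = (- ∫ x, g1 x * φ x ∂(muOm d Ω)) - (- ∫ x, g2 x * φ x ∂(muOm d Ω)) := by
        rw [hi1 φ hφ, hi2 φ hφ]
    _ = - ∫ x, (g1 x - g2 x) * φ x ∂(muOm d Ω) := by rw [hR]; ring

/-- `L2inner` is the (conjugated) inner product of `L²`. -/
lemma L2inner_eq_inner (f v : Hsp d Ω) : L2inner Ω f v = @inner ℂ _ _ v f := by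
  rw [L2inner, L2.inner_def]
  refine integral_congr_ae (Filter.Eventually.of_forall fun x => ?_)
  show (∑ k, f x k * conj (v x k)) = @inner ℂ _ _ (v x) (f x)
  rw [PiLp.inner_apply]
  exact Finset.sum_congr rfl fun k _ => by rw [RCLike.inner_apply]

lemma inner_toLp_eq {F : Edom d → Fcod d} (hF : MemLp F 2 (muOm d Ω)) (v : Hsp d Ω) :
    (@inner ℂ _ _ (hF.toLp F) v : ℂ) = ∫ x, ∑ m, conj (F x m) * v x m ∂(muOm d Ω) := by
  rw [L2.inner_def]
  apply integral_congr_ae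
  filter_upwards [hF.coeFn_toLp] with x hx
  show @inner ℂ _ _ ((hF.toLp F) x) (v x) = ∑ m, conj (F x m) * v x m
  rw [hx, PiLp.inner_apply]
  exact Finset.sum_congr rfl fun m _ => by rw [RCLike.inner_apply]; exact mul_comm _ _

/-- The gradient of a test function, as an element of `L²(Ω;ℂ^d)`. -/
lemma memℒp_grad {φ : Edom d → ℂ} (hφ : ContDiff ℝ (⊤ : ℕ∞) φ) (hs : HasCompactSupport φ) :
    MemLp (fun x => (WithLp.toLp 2 (fun j => pd j φ x) : Fcod d)) 2 (muOm d Ω) := by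
  have hc : Continuous (fun x => (WithLp.toLp 2 (fun j => pd j φ x) : Fcod d)) := by
    exact (PiLp.continuous_toLp 2 (fun _ : Fin d => ℂ)).comp
      (continuous_pi fun j => pd_continuous hφ j)
  have hsub : Function.support (fun x => (WithLp.toLp 2 (fun j => pd j φ x) : Fcod d)) ⊆ tsupport φ := by
    intro x hx
    rw [Function.mem_support] at hx
    by_contra hxn
    apply hx
    ext j
    simpa using pd_eq_zero_of_nmem hxn j
  have hsupp : HasCompactSupport (fun x => (WithLp.toLp 2 (fun j => pd j φ x) : Fcod d)) :=
    hs.isCompact.of_isClosed_subset isClosed_closure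
      (closure_minimal hsub (isClosed_tsupport φ))
  exact Continuous.memLp_of_hasCompactSupport (μ := muOm d Ω) hc hsupp

lemma rot_integral_zero (hΩ : IsOpen Ω) {φ : Edom d → ℂ} (hφ : IsTest Ω φ) (j k : Fin d)
    {w : Hsp d Ω} (hw : w ∈ closure (gradTest d Ω)) :
    ∫ x, (w x k * pd j φ x - w x j * pd k φ x) ∂(muOm d Ω) = 0 := by
  obtain ⟨hφs, hφc, hφΩ⟩ := hφ
  set F : Edom d → Fcod d := fun x => WithLp.toLp 2 (fun m =>
      (if m = k then conj (pd j φ x) else 0) - (if m = j then conj (pd k φ x) else 0)) with hFdef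
  have hFc : Continuous F := by
    apply (PiLp.continuous_toLp 2 (fun _ : Fin d => ℂ)).comp
    apply continuous_pi
    intro m
    apply Continuous.sub
    · by_cases hm : m = k
      · simpa [hm, Function.comp_def] using (Complex.continuous_conj.comp (pd_continuous hφs j))
      · simp [hm]; exact continuous_const
    · by_cases hm : m = j
      · simpa [hm, Function.comp_def] using (Complex.continuous_conj.comp (pd_continuous hφs k))
      · simp [hm]; exact continuous_const
  have hFsub : Function.support F ⊆ tsupport φ := by
    intro x hx
    rw [Function.mem_support] at hx
    by_contra hxn
    apply hx
    ext m
    have h1 : pd j φ x = 0 := pd_eq_zero_of_nmem hxn j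
    have h2 : pd k φ x = 0 := pd_eq_zero_of_nmem hxn k
    simp [hFdef, h1, h2]
  have hFsupp : HasCompactSupport F :=
    hφc.isCompact.of_isClosed_subset isClosed_closure
      (closure_minimal hFsub (isClosed_tsupport φ))
  have hF : MemLp F 2 (muOm d Ω) := hFc.memLp_of_hasCompactSupport hFsupp
  have key : ∀ v : Hsp d Ω, (@inner ℂ _ _ (hF.toLp F) v : ℂ)
      = ∫ x, (v x k * pd j φ x - v x j * pd k φ x) ∂(muOm d Ω) := by
    intro v
    rw [inner_toLp_eq]
    refine integral_congr_ae (Filter.Eventually.of_forall fun x => ?_)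
    show (∑ m, conj (F x m) * v x m) = v x k * pd j φ x - v x j * pd k φ x
    simp only [hFdef, PiLp.toLp_apply, map_sub, apply_ite conj, map_zero, Complex.conj_conj, sub_mul, ite_mul,
      zero_mul, Finset.sum_sub_distrib, Finset.sum_ite_eq', Finset.mem_univ, if_true]
    ring
  have hsub : closure (gradTest d Ω) ⊆ {v : Hsp d Ω | (@inner ℂ _ _ (hF.toLp F) v : ℂ) = 0} := by
    apply closure_minimal
    · rintro v ⟨ψ, hψs, hψc, hψae⟩
      show (@inner ℂ _ _ (hF.toLp F) v : ℂ) = 0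
      rw [key v]
      have hcongr : ∫ x, (v x k * pd j φ x - v x j * pd k φ x) ∂(muOm d Ω)
          = ∫ x, (pd k ψ x * pd j φ x - pd j ψ x * pd k φ x) ∂(muOm d Ω) := by
        refine integral_congr_ae ?_
        filter_upwards [hψae] with x hx
        rw [hx]
      rw [hcongr]
      have hvan : ∀ x ∉ Ω, (pd k ψ x * pd j φ x - pd j ψ x * pd k φ x) = 0 := by
        intro x hx
        have h1 : pd j φ x = 0 := pd_eq_zero_of_nmem (fun hm => hx (hφΩ hm)) j
        have h2 : pd k φ x = 0 := pd_eq_zero_of_nmem (fun hm => hx (hφΩ hm)) k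
        rw [h1, h2]; ring
      have hmu : muOm d Ω = volume.restrict Ω := rfl
      rw [hmu, setIntegral_eq_integral_of_forall_compl_eq_zero hvan]
      have i1 : Integrable (fun x => pd k ψ x * pd j φ x) volume :=
        ((pd_continuous hψs k).mul (pd_continuous hφs j)).integrable_of_hasCompactSupport
          (pd_hasCompactSupport hφc j).mul_left
      have i2 : Integrable (fun x => pd j ψ x * pd k φ x) volume :=
        ((pd_continuous hψs j).mul (pd_continuous hφs k)).integrable_of_hasCompactSupport
          (pd_hasCompactSupport hφc k).mul_left
      rw [integral_sub i1 i2]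
      rw [integral_pd_mul (pd_smooth hψs k) hφs (Or.inr hφc) j]
      rw [integral_pd_mul (pd_smooth hψs j) hφs (Or.inr hφc) k]
      have hcomm : (fun x => pd j (pd k ψ) x * φ x) = fun x => pd k (pd j ψ) x * φ x := by
        funext x; rw [pd_comm hψs]
      rw [hcomm]
      ring
    · exact isClosed_eq (Continuous.inner continuous_const continuous_id) continuous_const
  have := hsub hw
  rw [← key w]
  exact this

lemma condRot_zero_of_mem_closure (hΩ : IsOpen Ω) {w : Hsp d Ω}
    (hw : w ∈ closure (gradTest d Ω)) (j k : Fin d) :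
    CondRot Ω (⇑w) j k (fun _ => 0) := by
  refine ⟨by simpa using (zero_memLp : MemLp (0 : Edom d → ℂ) 2 (muOm d Ω)), fun φ hφ => ?_⟩
  rw [rot_integral_zero hΩ hφ j k hw]
  simp

lemma conj_smooth {φ : Edom d → ℂ} (h1 : ContDiff ℝ (⊤ : ℕ∞) φ) :
    ContDiff ℝ (⊤ : ℕ∞) (fun y => conj (φ y)) := by
  have h : (fun y => conj (φ y)) = fun y => (RCLike.conjCLE (K := ℂ)).toContinuousLinearMap (φ y) := by
    funext y; simp [RCLike.conjCLE_apply]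
  rw [h]
  exact (RCLike.conjCLE (K := ℂ)).toContinuousLinearMap.contDiff.comp h1

lemma conj_supp {φ : Edom d → ℂ} (h2 : HasCompactSupport φ) :
    HasCompactSupport (fun y => conj (φ y)) := by
  simpa [Function.comp_def] using h2.comp_left (g := conj) (by simp)

lemma hcs_of_subset {f : Edom d → ℂ} {K : Set (Edom d)} (hK : IsCompact K)
    (hcl : IsClosed K) (h : Function.support f ⊆ K) : HasCompactSupport f :=
  hK.of_isClosed_subset isClosed_closure (closure_minimal h hcl)

lemma gch_spec {u : Hsp d Ω} {j k : Fin d} (hex : ∃ g, CondRot Ω (⇑u) j k g) :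
    CondRot Ω (⇑u) j k (gch Ω u j k) := by
  have e : gch Ω u j k = hex.choose := dif_pos hex
  rw [e]; exact hex.choose_spec

lemma hch_spec {u : Hsp d Ω} (hex : ∃ h, CondDiv Ω (⇑u) h) :
    CondDiv Ω (⇑u) (hch Ω u) := by
  have e : hch Ω u = hex.choose := dif_pos hex
  rw [e]; exact hex.choose_spec

variable {Pperp : Hsp d Ω → Hsp d Ω}

lemma condDiv_Pperp (hPorth : ∀ x : Hsp d Ω, ∀ w ∈ closure (gradTest d Ω),
      L2inner Ω (Pperp x) w = 0) (u : Hsp d Ω) :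
    CondDiv Ω (⇑(Pperp u)) (fun _ => 0) := by
  refine ⟨by simpa using (zero_memLp : MemLp (0 : Edom d → ℂ) 2 (muOm d Ω)), fun φ h1 h2 => ?_⟩
  have hψ1 : ContDiff ℝ (⊤ : ℕ∞) (fun y => conj (φ y)) := conj_smooth h1
  have hψ2 : HasCompactSupport (fun y => conj (φ y)) := conj_supp h2
  have hmem : (memℒp_grad hψ1 hψ2 (Ω := Ω)).toLp _ ∈ gradTest d Ω :=
    ⟨fun y => conj (φ y), hψ1, hψ2, MemLp.coeFn_toLp _⟩
  have h0 := hPorth u _ (subset_closure hmem)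
  rw [L2inner] at h0
  have hmain : ∫ x, (∑ i, Pperp u x i * pd i φ x) ∂(muOm d Ω) = 0 := by
    rw [← h0]
    apply integral_congr_ae
    filter_upwards [(memℒp_grad hψ1 hψ2 (Ω := Ω)).coeFn_toLp] with x hx
    simp only [hx]
    refine Finset.sum_congr rfl fun i _ => ?_
    rw [pd_conj h1 i x, Complex.conj_conj]
  rw [hmain]
  simp

lemma condRot_Pperp (hΩ : IsOpen Ω)
    (hPmem : ∀ x : Hsp d Ω, x - Pperp x ∈ closure (gradTest d Ω))
    {u : Hsp d Ω} {j k : Fin d} {g : Edom d → ℂ}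
    (hg : CondRot Ω (⇑u) j k g) : CondRot Ω (⇑(Pperp u)) j k g := by
  have h0 : CondRot Ω (⇑(u - Pperp u)) j k (fun _ => 0) :=
    condRot_zero_of_mem_closure hΩ (hPmem u) j k
  have h1 := condRot_sub u (u - Pperp u) hg h0
  rw [sub_sub_cancel] at h1
  simpa using h1

lemma memV_Pperp (hΩ : IsOpen Ω)
    (hPmem : ∀ x : Hsp d Ω, x - Pperp x ∈ closure (gradTest d Ω))
    (hPorth : ∀ x : Hsp d Ω, ∀ w ∈ closure (gradTest d Ω), L2inner Ω (Pperp x) w = 0)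
    {u : Hsp d Ω} (hu : memV Ω u) : memV Ω (Pperp u) := by
  refine ⟨fun j k => ?_, ⟨fun _ => 0, condDiv_Pperp hPorth u⟩⟩
  obtain ⟨g, hg⟩ := hu.1 j k
  exact ⟨g, condRot_Pperp hΩ hPmem hg⟩

lemma gch_Pperp_ae (hΩ : IsOpen Ω)
    (hPmem : ∀ x : Hsp d Ω, x - Pperp x ∈ closure (gradTest d Ω))
    {u : Hsp d Ω} (hu : memV Ω u) (j k : Fin d) :
    gch Ω (Pperp u) j k =ᵐ[muOm d Ω] gch Ω u j k := by
  have hgu : CondRot Ω (⇑u) j k (gch Ω u j k) := gch_spec (hu.1 j k)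
  have h2 : CondRot Ω (⇑(Pperp u)) j k (gch Ω u j k) := condRot_Pperp hΩ hPmem hgu
  have h1 : CondRot Ω (⇑(Pperp u)) j k (gch Ω (Pperp u) j k) := gch_spec ⟨_, h2⟩
  exact condRot_ae_unique hΩ h1 h2

lemma hch_Pperp_ae (hΩ : IsOpen Ω)
    (hPorth : ∀ x : Hsp d Ω, ∀ w ∈ closure (gradTest d Ω), L2inner Ω (Pperp x) w = 0)
    (u : Hsp d Ω) :
    hch Ω (Pperp u) =ᵐ[muOm d Ω] (fun _ => 0) := by
  have h2 : CondDiv Ω (⇑(Pperp u)) (fun _ => 0) := condDiv_Pperp hPorth u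
  have h1 : CondDiv Ω (⇑(Pperp u)) (hch Ω (Pperp u)) := hch_spec ⟨_, h2⟩
  exact condDiv_ae_unique hΩ h1 h2

lemma formA_Pperp (hΩ : IsOpen Ω)
    (hPmem : ∀ x : Hsp d Ω, x - Pperp x ∈ closure (gradTest d Ω))
    (hPorth : ∀ x : Hsp d Ω, ∀ w ∈ closure (gradTest d Ω), L2inner Ω (Pperp x) w = 0)
    {u v : Hsp d Ω} (hu : memV Ω u) (hv : memV Ω v) :
    formA Ω (Pperp u) v = formA Ω u (Pperp v) := by
  have hgu : ∀ j k : Fin d, ∫ x, gch Ω (Pperp u) j k x * conj (gch Ω v j k x) ∂(muOm d Ω)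
      = ∫ x, gch Ω u j k x * conj (gch Ω (Pperp v) j k x) ∂(muOm d Ω) := by
    intro j k
    apply integral_congr_ae
    filter_upwards [gch_Pperp_ae hΩ hPmem hu j k, gch_Pperp_ae hΩ hPmem hv j k] with x hx1 hx2
    rw [hx1, hx2]
  have hh1 : ∫ x, hch Ω (Pperp u) x * conj (hch Ω v x) ∂(muOm d Ω) = 0 := by
    have h : ∫ x, hch Ω (Pperp u) x * conj (hch Ω v x) ∂(muOm d Ω)
        = ∫ _x, (0 : ℂ) ∂(muOm d Ω) := by
      apply integral_congr_ae
      filter_upwards [hch_Pperp_ae hΩ hPorth u] with x hx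
      rw [hx]; simp
    rw [h, integral_zero]
  have hh2 : ∫ x, hch Ω u x * conj (hch Ω (Pperp v) x) ∂(muOm d Ω) = 0 := by
    have h : ∫ x, hch Ω u x * conj (hch Ω (Pperp v) x) ∂(muOm d Ω)
        = ∫ _x, (0 : ℂ) ∂(muOm d Ω) := by
      apply integral_congr_ae
      filter_upwards [hch_Pperp_ae hΩ hPorth v] with x hx
      rw [hx]; simp
    rw [h, integral_zero]
  have hsum : (∑ j : Fin d, ∑ k : Fin d,
        ∫ x, gch Ω (Pperp u) j k x * conj (gch Ω v j k x) ∂(muOm d Ω))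
      = ∑ j : Fin d, ∑ k : Fin d,
        ∫ x, gch Ω u j k x * conj (gch Ω (Pperp v) j k x) ∂(muOm d Ω) :=
    Finset.sum_congr rfl fun j _ => Finset.sum_congr rfl fun k _ => hgu j k
  rw [formA, formA, hsum, hh1, hh2]

lemma L2inner_Pperp
    (hPmem : ∀ x : Hsp d Ω, x - Pperp x ∈ closure (gradTest d Ω))
    (hPorth : ∀ x : Hsp d Ω, ∀ w ∈ closure (gradTest d Ω), L2inner Ω (Pperp x) w = 0)
    (f v : Hsp d Ω) : L2inner Ω (Pperp f) v = L2inner Ω f (Pperp v) := by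
  rw [L2inner_eq_inner, L2inner_eq_inner]
  have e1 : (@inner ℂ _ _ (v - Pperp v) (Pperp f) : ℂ) = 0 := by
    rw [← L2inner_eq_inner]; exact hPorth f _ (hPmem v)
  have e2 : (@inner ℂ _ _ (f - Pperp f) (Pperp v) : ℂ) = 0 := by
    rw [← L2inner_eq_inner]; exact hPorth v _ (hPmem f)
  have e2' : (@inner ℂ _ _ (Pperp v) (f - Pperp f) : ℂ) = 0 := by
    rw [← inner_conj_symm, e2, map_zero]
  rw [inner_sub_left (𝕜 := ℂ)] at e1
  rw [inner_sub_right (𝕜 := ℂ)] at e2'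
  have h1 : (@inner ℂ _ _ v (Pperp f) : ℂ) = @inner ℂ _ _ (Pperp v) (Pperp f) :=
    sub_eq_zero.mp e1
  have h2 : (@inner ℂ _ _ (Pperp v) f : ℂ) = @inner ℂ _ _ (Pperp v) (Pperp f) :=
    sub_eq_zero.mp e2'
  rw [h1, h2]

lemma isTest_zero : IsTest Ω (fun _ : Edom d => (0 : ℂ)) := by
  have hsupp : Function.support (fun _ : Edom d => (0 : ℂ)) = ∅ := Function.support_zero
  have ht : tsupport (fun _ : Edom d => (0 : ℂ)) = ∅ := by
    rw [tsupport, hsupp, closure_empty]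
  refine ⟨contDiff_const, ?_, ?_⟩
  · rw [HasCompactSupport, ht]; exact isCompact_empty
  · rw [ht]; exact Set.empty_subset _

lemma memℒp_field {C : Fin d → Edom d → ℂ} (hc : ∀ i, Continuous (C i))
    (hs : ∀ i, HasCompactSupport (C i)) :
    MemLp (fun x => (WithLp.toLp 2 (fun i => C i x) : Fcod d)) 2 (muOm d Ω) := by
  have hcont : Continuous (fun x => (WithLp.toLp 2 (fun i => C i x) : Fcod d)) :=
    (PiLp.continuous_toLp 2 (fun _ : Fin d => ℂ)).comp (continuous_pi fun i => hc i)
  have hsub : Function.support (fun x => (WithLp.toLp 2 (fun i => C i x) : Fcod d))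
      ⊆ ⋃ i, tsupport (C i) := by
    intro x hx
    rw [Function.mem_support] at hx
    by_contra hxn
    apply hx
    ext i
    have : x ∉ tsupport (C i) := fun hm => hxn (Set.mem_iUnion.2 ⟨i, hm⟩)
    simpa using image_eq_zero_of_notMem_tsupport this
  have hK : HasCompactSupport (fun x => (WithLp.toLp 2 (fun i => C i x) : Fcod d)) := by
    apply (isCompact_iUnion fun i => (hs i).isCompact).of_isClosed_subset isClosed_closure
    exact closure_minimal hsub (isClosed_iUnion_of_finite fun i => isClosed_tsupport _)
  exact Continuous.memLp_of_hasCompactSupport (μ := muOm d Ω) hcont hK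

lemma memV_testfield (hΩ : IsOpen Ω) {C : Fin d → Edom d → ℂ} (hC : ∀ i, IsTest Ω (C i)) :
    memV Ω ((memℒp_field (fun i => (hC i).1.continuous) (fun i => (hC i).2.1)).toLp
      (fun x => WithLp.toLp 2 (fun i => C i x)) : Hsp d Ω) := by
  set W : Hsp d Ω := (memℒp_field (fun i => (hC i).1.continuous) (fun i => (hC i).2.1)).toLp
      (fun x => WithLp.toLp 2 (fun i => C i x)) with hW
  have hWc : ⇑W =ᵐ[muOm d Ω] (fun x => (WithLp.toLp 2 (fun i => C i x) : Fcod d)) := MemLp.coeFn_toLp _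
  have hmu : muOm d Ω = volume.restrict Ω := rfl
  have hCvan : ∀ (i : Fin d), ∀ x ∉ Ω, C i x = 0 := by
    intro i x hx
    exact image_eq_zero_of_notMem_tsupport (fun hm => hx ((hC i).2.2 hm))
  have hpdvan : ∀ (i m : Fin d), ∀ x ∉ Ω, pd m (C i) x = 0 := by
    intro i m x hx
    exact pd_eq_zero_of_nmem (fun hm => hx ((hC i).2.2 hm)) m
  constructor
  · intro j k
    refine ⟨fun x => pd j (C k) x - pd k (C j) x, ?_, ?_⟩
    · apply memℒp_of_test
      · exact (pd_continuous (hC k).1 j).sub (pd_continuous (hC j).1 k)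
      · refine hcs_of_subset (K := tsupport (pd j (C k)) ∪ tsupport (pd k (C j)))
          ((pd_hasCompactSupport (hC k).2.1 j).union (pd_hasCompactSupport (hC j).2.1 k))
          ((isClosed_tsupport _).union (isClosed_tsupport _)) ?_
        intro x hx
        rw [Function.mem_support] at hx
        by_contra hxn
        apply hx
        have n1 : pd j (C k) x = 0 :=
          image_eq_zero_of_notMem_tsupport (fun h => hxn (Set.mem_union_left _ h))
        have n2 : pd k (C j) x = 0 :=
          image_eq_zero_of_notMem_tsupport (fun h => hxn (Set.mem_union_right _ h))
        rw [n1, n2, sub_zero]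
    · intro φ hφ
      have hint1 : Integrable (fun x => C k x * pd j φ x) volume :=
        ((hC k).1.continuous.mul (pd_continuous hφ.1 j)).integrable_of_hasCompactSupport
          (hC k).2.1.mul_right
      have hint2 : Integrable (fun x => C j x * pd k φ x) volume :=
        ((hC j).1.continuous.mul (pd_continuous hφ.1 k)).integrable_of_hasCompactSupport
          (hC j).2.1.mul_right
      have hint3 : Integrable (fun x => pd j (C k) x * φ x) volume :=
        ((pd_continuous (hC k).1 j).mul hφ.1.continuous).integrable_of_hasCompactSupport
          (pd_hasCompactSupport (hC k).2.1 j).mul_right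
      have hint4 : Integrable (fun x => pd k (C j) x * φ x) volume :=
        ((pd_continuous (hC j).1 k).mul hφ.1.continuous).integrable_of_hasCompactSupport
          (pd_hasCompactSupport (hC j).2.1 k).mul_right
      calc ∫ x, (W x k * pd j φ x - W x j * pd k φ x) ∂(muOm d Ω)
          = ∫ x, (C k x * pd j φ x - C j x * pd k φ x) ∂(muOm d Ω) := by
            apply integral_congr_ae
            filter_upwards [hWc] with x hx
            rw [hx]
        _ = ∫ x, (C k x * pd j φ x - C j x * pd k φ x) := by
            rw [hmu]
            exact setIntegral_eq_integral_of_forall_compl_eq_zero (fun x hx => by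
              rw [hCvan k x hx, hCvan j x hx]; ring)
        _ = (∫ x, C k x * pd j φ x) - ∫ x, C j x * pd k φ x := integral_sub hint1 hint2
        _ = (- ∫ x, pd j (C k) x * φ x) - (- ∫ x, pd k (C j) x * φ x) := by
            rw [integral_pd_mul (hC k).1 hφ.1 (Or.inl (hC k).2.1) j,
              integral_pd_mul (hC j).1 hφ.1 (Or.inl (hC j).2.1) k]
        _ = - ∫ x, (pd j (C k) x - pd k (C j) x) * φ x := by
            have hsint : ∫ x, (pd j (C k) x - pd k (C j) x) * φ x
                = (∫ x, pd j (C k) x * φ x) - ∫ x, pd k (C j) x * φ x := by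
              rw [← integral_sub hint3 hint4]
              congr 1; funext x; ring
            rw [hsint]; ring
        _ = - ∫ x, (pd j (C k) x - pd k (C j) x) * φ x ∂(muOm d Ω) := by
            rw [hmu]
            congr 1
            exact (setIntegral_eq_integral_of_forall_compl_eq_zero (fun x hx => by
              rw [hpdvan k j x hx, hpdvan j k x hx]; ring)).symm
  · refine ⟨fun x => ∑ i, pd i (C i) x, ?_, ?_⟩
    · exact memLp_finset_sum Finset.univ (fun i _ =>
        memℒp_of_test (pd_continuous (hC i).1 i) (pd_hasCompactSupport (hC i).2.1 i))
    · intro φ h1 h2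
      have hint : ∀ i : Fin d, Integrable (fun x => C i x * pd i φ x) volume := fun i =>
        ((hC i).1.continuous.mul (pd_continuous h1 i)).integrable_of_hasCompactSupport
          (hC i).2.1.mul_right
      have hint2 : ∀ i : Fin d, Integrable (fun x => pd i (C i) x * φ x) volume := fun i =>
        ((pd_continuous (hC i).1 i).mul h1.continuous).integrable_of_hasCompactSupport
          (pd_hasCompactSupport (hC i).2.1 i).mul_right
      calc ∫ x, (∑ i, W x i * pd i φ x) ∂(muOm d Ω)
          = ∫ x, (∑ i, C i x * pd i φ x) ∂(muOm d Ω) := by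
            apply integral_congr_ae
            filter_upwards [hWc] with x hx
            rw [hx]
        _ = ∫ x, (∑ i, C i x * pd i φ x) := by
            rw [hmu]
            exact setIntegral_eq_integral_of_forall_compl_eq_zero (fun x hx => by
              refine Finset.sum_eq_zero fun i _ => ?_
              rw [hCvan i x hx, zero_mul])
        _ = ∑ i, ∫ x, C i x * pd i φ x := integral_finset_sum Finset.univ (fun i _ => hint i)
        _ = ∑ i : Fin d, - ∫ x, pd i (C i) x * φ x :=
            Finset.sum_congr rfl fun i _ => integral_pd_mul (hC i).1 h1 (Or.inl (hC i).2.1) i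
        _ = - ∑ i : Fin d, ∫ x, pd i (C i) x * φ x := by rw [Finset.sum_neg_distrib]
        _ = - ∫ x, ∑ i, pd i (C i) x * φ x := by
            rw [integral_finset_sum Finset.univ (fun i _ => hint2 i)]
        _ = - ∫ x, (∑ i, pd i (C i) x) * φ x := by
            congr 1
            refine integral_congr_ae (Filter.Eventually.of_forall fun x => ?_)
            simp only [Finset.sum_mul]
        _ = - ∫ x, (∑ i, pd i (C i) x) * φ x ∂(muOm d Ω) := by
            rw [hmu]
            congr 1
            exact (setIntegral_eq_integral_of_forall_compl_eq_zero (fun x hx => by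
              refine mul_eq_zero_of_left (Finset.sum_eq_zero fun i _ => ?_) _
              exact hpdvan i i x hx)).symm

lemma L2inner_inj (hΩ : IsOpen Ω) {A B : Hsp d Ω}
    (h : ∀ v, memV Ω v → L2inner Ω A v = L2inner Ω B v) : A = B := by
  have hcoord : ∀ m : Fin d, (fun x => A x m - B x m) =ᵐ[muOm d Ω] 0 := by
    intro m
    apply ae_eq_zero_of_integral_test hΩ ((memℒp_coord A m).sub (memℒp_coord B m))
    intro ψ hψ
    set C : Fin d → Edom d → ℂ := fun i x => if i = m then conj (ψ x) else 0 with hCdef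
    have hC : ∀ i, IsTest Ω (C i) := by
      intro i
      by_cases hi : i = m
      · simpa [hCdef, hi] using isTest_conj hψ
      · simpa [hCdef, hi] using (isTest_zero (Ω := Ω))
    have hv := memV_testfield hΩ hC
    have hkey : ∀ D : Hsp d Ω,
        L2inner Ω D ((memℒp_field (fun i => (hC i).1.continuous)
          (fun i => (hC i).2.1)).toLp (fun x => WithLp.toLp 2 (fun i => C i x)) : Hsp d Ω)
        = ∫ x, D x m * ψ x ∂(muOm d Ω) := by
      intro D
      rw [L2inner]
      apply integral_congr_ae
      filter_upwards [MemLp.coeFn_toLp (memℒp_field (fun i => (hC i).1.continuous)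
        (fun i => (hC i).2.1))] with x hx
      rw [hx]
      simp only [hx, hCdef, PiLp.toLp_apply, apply_ite conj, Complex.conj_conj, map_zero, mul_ite, mul_zero,
        Finset.sum_ite_eq', Finset.mem_univ, if_true]
    have h0 := h _ hv
    rw [hkey A, hkey B] at h0
    have hψ2 : MemLp ψ 2 (muOm d Ω) := memℒp_of_test hψ.1.continuous hψ.2.1
    have hiA : Integrable (fun x => A x m * ψ x) (muOm d Ω) :=
      integrable_mul_L2 (memℒp_coord A m) hψ2
    have hiB : Integrable (fun x => B x m * ψ x) (muOm d Ω) :=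
      integrable_mul_L2 (memℒp_coord B m) hψ2
    have heq : (fun x => (A x m - B x m) * ψ x) = fun x => A x m * ψ x - B x m * ψ x := by
      funext x; ring
    show ∫ x, (A x m - B x m) * ψ x ∂(muOm d Ω) = 0
    rw [heq, integral_sub hiA hiB, h0, sub_self]
  have hall : ∀ᵐ x ∂(muOm d Ω), ∀ m : Fin d, A x m - B x m = 0 :=
    ae_all_iff.2 (fun m => by filter_upwards [hcoord m] with x hx; simpa using hx)
  apply Lp.ext (p := (2 : ENNReal)) (μ := muOm d Ω)
  filter_upwards [hall] with x hx
  ext m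
  exact sub_eq_zero.mp (hx m)


end Aux

/-- The orthogonal projection `Pperp` of `L²(Ω;ℂ^d)` onto `𝒢²(Ω)^⊥`
(characterized by `x - Pperp x ∈ 𝒢²(Ω)` and `Pperp x ⟂ 𝒢²(Ω)`) commutes with the Hodge
Laplacian: if `u ∈ D(-Δ_H)` then `Pperp u ∈ D(-Δ_H)` and `-Δ_H (Pperp u) = Pperp (-Δ_H u)`. -/
theorem proj_gradPerp_commutes_hodgeLaplacian (d : ℕ) (Ω : Set (Edom d)) (hΩ : IsOpen Ω)
    (Pperp : Hsp d Ω → Hsp d Ω)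
    (hPmem : ∀ x : Hsp d Ω, x - Pperp x ∈ closure (gradTest d Ω))
    (hPorth : ∀ x : Hsp d Ω, ∀ w ∈ closure (gradTest d Ω), L2inner Ω (Pperp x) w = 0) :
    ∀ u : Hsp d Ω, memD Ω u → memD Ω (Pperp u) ∧ HLap Ω (Pperp u) = Pperp (HLap Ω u) := by
  intro u hu
  have hfspec : ∀ v, memV Ω v → formA Ω u v = L2inner Ω (HLap Ω u) v := by
    intro v hv
    have e : HLap Ω u = hu.2.choose := dif_pos hu
    rw [e]
    exact hu.2.choose_spec v hv
  have hPuV : memV Ω (Pperp u) := memV_Pperp hΩ hPmem hPorth hu.1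
  have hrep : ∀ v, memV Ω v → formA Ω (Pperp u) v = L2inner Ω (Pperp (HLap Ω u)) v := by
    intro v hv
    have hPvV : memV Ω (Pperp v) := memV_Pperp hΩ hPmem hPorth hv
    calc formA Ω (Pperp u) v = formA Ω u (Pperp v) := formA_Pperp hΩ hPmem hPorth hu.1 hv
      _ = L2inner Ω (HLap Ω u) (Pperp v) := hfspec _ hPvV
      _ = L2inner Ω (Pperp (HLap Ω u)) v := (L2inner_Pperp hPmem hPorth _ v).symm
  have hD : memD Ω (Pperp u) := ⟨hPuV, ⟨Pperp (HLap Ω u), hrep⟩⟩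
  refine ⟨hD, ?_⟩
  have e2 : HLap Ω (Pperp u) = hD.2.choose := dif_pos hD
  have hspec2 := hD.2.choose_spec
  have huniq : hD.2.choose = Pperp (HLap Ω u) :=
    L2inner_inj hΩ (fun v hv => by rw [← hspec2 v hv, hrep v hv])
  rw [e2, huniq]
end
end

section
/- Let θ ∈ (0, π/2), c ∈ (0, sin θ), M ≥ 0, and let F : ℂ → ℂ be complex differentiable at every point of the open sector Σ_θ° with |F(z)| ≤ M for all z ∈ Σ_θ°. Then for every t > 0 and every k ∈ ℕ, the k-th complex derivative of F at the real point t satisfies |F^{(k)}(t)| ≤ k!·M / (c·t)^k; equivalently, sup_{t>0} t^k |F^{(k)}(t)| ≤ (k!/c^k)·M. -/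
/-!
STATEMENT 6: Cauchy estimates on a sector. If `F` is holomorphic and bounded by `M` on the
open sector `Σ_θ°` and `0 < c < sin θ`, then for every `t > 0` and `k ∈ ℕ`,
`|F^{(k)}(t)| ≤ k!·M/(c·t)^k`; equivalently `t^k |F^{(k)}(t)| ≤ (k!/c^k)·M`.
-/

open Real

/-- The open sector `Σ_θ° = {z ≠ 0 : |arg z| < θ}`. -/
def openSector (θ : ℝ) : Set ℂ := {z : ℂ | z ≠ 0 ∧ |Complex.arg z| < θ}

/-- The closed ball of radius `c·t` around `t` is contained in the sector. -/
lemma closedBall_subset_openSector (θ : ℝ) (hθ0 : 0 < θ) (hθ : θ < π / 2)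
    (c : ℝ) (hc0 : 0 < c) (hc : c < Real.sin θ) (t : ℝ) (ht : 0 < t) :
    Metric.closedBall (t : ℂ) (c * t) ⊆ openSector θ := by
  intro z hz
  rw [Metric.mem_closedBall, Complex.dist_eq] at hz
  have hpi : θ < π := lt_trans hθ (by linarith [Real.pi_pos])
  have hsin : 0 < Real.sin θ := Real.sin_pos_of_pos_of_lt_pi hθ0 hpi
  have hcos : 0 < Real.cos θ := Real.cos_pos_of_mem_Ioo ⟨by linarith, hθ⟩
  have hsq : (z.re - t) ^ 2 + z.im ^ 2 ≤ (c * t) ^ 2 := by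
    have h1 : (‖z - t‖) ^ 2 ≤ (c * t) ^ 2 :=
      pow_le_pow_left₀ (norm_nonneg _) hz 2
    have h2 : (‖z - t‖) ^ 2 = (z.re - t) ^ 2 + z.im ^ 2 := by
      rw [Complex.sq_norm, Complex.normSq_apply]
      simp [Complex.sub_re, Complex.sub_im]
      ring
    linarith [h2 ▸ h1]
  have hpyth : Real.sin θ ^ 2 + Real.cos θ ^ 2 = 1 := Real.sin_sq_add_cos_sq θ
  -- key geometric inequality
  have hA : |z.im| ^ 2 = z.im ^ 2 := sq_abs z.im
  have h5 : (Real.sin θ * (t - z.re) + Real.cos θ * |z.im|) ^ 2 ≤ (c * t) ^ 2 := by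
    nlinarith [sq_nonneg (Real.sin θ * |z.im| - Real.cos θ * (t - z.re))]
  have hct2 : (c * t) ^ 2 < (Real.sin θ * t) ^ 2 :=
    pow_lt_pow_left₀ (mul_lt_mul_of_pos_right hc ht) (mul_pos hc0 ht).le two_ne_zero
  have h5' : (Real.sin θ * (t - z.re) + Real.cos θ * |z.im|) ^ 2 < (Real.sin θ * t) ^ 2 :=
    lt_of_le_of_lt h5 hct2
  have h6 : Real.sin θ * (t - z.re) + Real.cos θ * |z.im| < Real.sin θ * t :=
    lt_of_pow_lt_pow_left₀ 2 (mul_pos hsin ht).le h5'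
  have key : Real.cos θ * |z.im| < Real.sin θ * z.re := by nlinarith [h6]
  have hx : 0 < z.re := by nlinarith [abs_nonneg z.im, mul_nonneg hcos.le (abs_nonneg z.im)]
  have hz0 : z ≠ 0 := by
    intro h
    rw [h] at hx
    simp at hx
  refine ⟨hz0, ?_⟩
  have habs : 0 < ‖z‖ := norm_pos_iff.mpr hz0
  have habs2 : (‖z‖) ^ 2 = z.re ^ 2 + z.im ^ 2 := by
    rw [Complex.sq_norm, Complex.normSq_apply]; ring
  have h8 : 0 < Real.sin θ * z.re + Real.cos θ * |z.im| :=
    add_pos_of_pos_of_nonneg (mul_pos hsin hx) (mul_nonneg hcos.le (abs_nonneg z.im))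
  have h7 : |z.im| ^ 2 < (Real.sin θ * ‖z‖) ^ 2 := by
    nlinarith [habs2, hA, hpyth, mul_pos (sub_pos.mpr key) h8, sq_nonneg z.im]
  have key2 : |z.im| < Real.sin θ * ‖z‖ :=
    lt_of_pow_lt_pow_left₀ 2 (mul_pos hsin habs).le h7
  rw [Complex.arg_of_re_nonneg hx.le, abs_lt]
  constructor
  · rw [Real.lt_arcsin_iff_sin_lt' ⟨by linarith, by linarith⟩, Real.sin_neg,
      lt_div_iff₀ habs]
    linarith [neg_abs_le z.im, key2]
  · rw [Real.arcsin_lt_iff_lt_sin' ⟨by linarith, le_of_lt hθ⟩, div_lt_iff₀ habs]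
    linarith [le_abs_self z.im, key2]

theorem cauchy_estimates_on_sector (θ : ℝ) (hθ0 : 0 < θ) (hθ : θ < π / 2)
    (c : ℝ) (hc0 : 0 < c) (hc : c < Real.sin θ)
    (M : ℝ) (hM : 0 ≤ M) (F : ℂ → ℂ)
    (hF : ∀ z ∈ openSector θ, DifferentiableAt ℂ F z)
    (hFb : ∀ z ∈ openSector θ, ‖F z‖ ≤ M) :
    ∀ t : ℝ, 0 < t → ∀ k : ℕ,
      ‖iteratedDeriv k F (t : ℂ)‖ ≤ (k.factorial : ℝ) * M / (c * t) ^ k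
      ∧ t ^ k * ‖iteratedDeriv k F (t : ℂ)‖ ≤ ((k.factorial : ℝ) / c ^ k) * M := by
  intro t ht k
  have hr0 : (0 : ℝ) < c * t := mul_pos hc0 ht
  set r : NNReal := ⟨c * t, hr0.le⟩ with hr
  have hrr : (r : ℝ) = c * t := rfl
  have hsub : Metric.closedBall (t : ℂ) (c * t) ⊆ openSector θ :=
    closedBall_subset_openSector θ hθ0 hθ c hc0 hc t ht
  have hd : DifferentiableOn ℂ F (Metric.closedBall (t : ℂ) r) := fun z hz =>
    (hF z (hsub hz)).differentiableWithinAt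
  have hps : HasFPowerSeriesOnBall F (cauchyPowerSeries F t r) (t : ℂ) r :=
    hd.hasFPowerSeriesOnBall (by exact_mod_cast hr0)
  set p := cauchyPowerSeries F (t : ℂ) r with hp
  -- identify the iterated derivative with the power series coefficient
  have hiter : ‖iteratedDeriv k F (t : ℂ)‖ =
      (k.factorial : ℝ) * ‖p k (fun _ => (1 : ℂ))‖ := by
    have := hps.factorial_smul (1 : ℂ) k
    rw [iteratedDeriv_eq_iteratedFDeriv, ← this]
    simp [norm_smul]
  -- bound the coefficient norm
  have hnorm : ‖p k‖ ≤ M / (c * t) ^ k := by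
    have h1 := norm_cauchyPowerSeries_le F (t : ℂ) r k
    have hint : (∫ θ' : ℝ in (0)..2 * π, ‖F (circleMap (t : ℂ) r θ')‖) ≤ M * (2 * π) := by
      have h2 : ∀ x ∈ Set.uIoc (0 : ℝ) (2 * π),
          ‖‖F (circleMap (t : ℂ) r x)‖‖ ≤ M := by
        intro x _
        rw [norm_norm]
        exact hFb _ (hsub (Metric.sphere_subset_closedBall
          (circleMap_mem_sphere (t : ℂ) (by exact_mod_cast hr0.le) x)))
      calc (∫ θ' : ℝ in (0)..2 * π, ‖F (circleMap (t : ℂ) r θ')‖)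
          ≤ ‖∫ θ' : ℝ in (0)..2 * π, ‖F (circleMap (t : ℂ) r θ')‖‖ := le_abs_self _
        _ ≤ M * |2 * π - 0| := intervalIntegral.norm_integral_le_of_norm_le_const h2
        _ = M * (2 * π) := by rw [sub_zero, abs_of_pos Real.two_pi_pos]
    have hπ : (0 : ℝ) < 2 * π := Real.two_pi_pos
    have h3 : ((2 * π)⁻¹ * ∫ θ' : ℝ in (0)..2 * π, ‖F (circleMap (t : ℂ) r θ')‖) ≤ M := by
      rw [inv_mul_le_iff₀ hπ]
      linarith [hint]
    have h4 : |(r : ℝ)|⁻¹ ^ k = ((c * t) ^ k)⁻¹ := by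
      rw [hrr, abs_of_pos hr0, inv_pow]
    calc ‖p k‖ ≤ ((2 * π)⁻¹ * ∫ θ' : ℝ in (0)..2 * π, ‖F (circleMap (t : ℂ) r θ')‖) *
          |(r : ℝ)|⁻¹ ^ k := h1
      _ ≤ M * ((c * t) ^ k)⁻¹ := by
          rw [h4]
          exact mul_le_mul_of_nonneg_right h3 (by positivity)
      _ = M / (c * t) ^ k := by rw [div_eq_mul_inv]
  have happ : ‖p k (fun _ => (1 : ℂ))‖ ≤ ‖p k‖ := by
    have := (p k).le_opNorm (fun _ => (1 : ℂ))
    simpa using this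
  have main : ‖iteratedDeriv k F (t : ℂ)‖ ≤
      (k.factorial : ℝ) * M / (c * t) ^ k := by
    rw [hiter, mul_div_assoc]
    exact mul_le_mul_of_nonneg_left (happ.trans hnorm) (by positivity)
  refine ⟨main, ?_⟩
  have heq : t ^ k * ((k.factorial : ℝ) * M / (c * t) ^ k) =
      ((k.factorial : ℝ) / c ^ k) * M := by
    rw [mul_pow]
    field_simp
  calc t ^ k * ‖iteratedDeriv k F (t : ℂ)‖
      ≤ t ^ k * ((k.factorial : ℝ) * M / (c * t) ^ k) :=
        mul_le_mul_of_nonneg_left main (by positivity)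
    _ = ((k.factorial : ℝ) / c ^ k) * M := heq
end

section
/- Let θ ∈ (0, π/2), let k ∈ ℕ, and let η : ℝ → ℂ be infinitely differentiable with compact support contained in (0,∞). Then there exists a constant C > 0 such that for every M ≥ 0, every function F : ℂ → ℂ that is complex differentiable on Σ_θ° with |F(z)| ≤ M for all z ∈ Σ_θ°, every t > 0, and every j ∈ {0,…,k}, the function G_t : ℝ → ℂ, G_t(s) := η(s)·F(t·s), is k-times differentiable on ℝ and its j-th derivative satisfies ‖G_t^{(j)}‖_{L²(ℝ)} ≤ C·M. (Thus bounded holomorphic functions on a sector satisfy the Hörmander condition sup_{t>0} ‖η(·)F(t·)‖_{W^{k,2}(ℝ)} ≲ sup_{Σ_θ°}|F|.) -/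
set_option maxHeartbeats 1000000

/-!
STATEMENT 7: Bounded holomorphic functions on a sector satisfy the Hörmander condition:
for smooth `η` compactly supported in `(0,∞)` and any `k`, there is `C > 0` such that for
all `F` holomorphic and bounded by `M` on `Σ_θ°`, every `t > 0` and every `j ≤ k`, the
function `s ↦ η(s)·F(t·s)` is `C^k` on `ℝ` and `‖(η(·)F(t·))^{(j)}‖_{L²(ℝ)} ≤ C·M`.
-/

open Real MeasureTheory
open ENNReal NNReal

lemma closedBall_subset_openSector_s7 {θ : ℝ} (hθ0 : 0 < θ) (hθ : θ < π / 2) {x r : ℝ}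
    (hx : 0 < x) (hr : r < Real.sin θ / (1 + Real.sin θ) * x) :
    Metric.closedBall (x : ℂ) r ⊆ openSector θ := by
  intro z hz
  have hπ := Real.pi_pos
  have hsθ : 0 < Real.sin θ := Real.sin_pos_of_pos_of_lt_pi hθ0 (by linarith)
  have hs1 : Real.sin θ ≤ 1 := Real.sin_le_one θ
  have hzx : ‖z - x‖ ≤ r := by
    rwa [Metric.mem_closedBall, Complex.dist_eq] at hz
  have him : |z.im| ≤ r := by
    have h := Complex.abs_im_le_norm (z - x)
    simp only [Complex.sub_im, Complex.ofReal_im, sub_zero] at h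
    exact h.trans hzx
  have hre : x - r ≤ z.re := by
    have h := Complex.abs_re_le_norm (z - x)
    simp only [Complex.sub_re, Complex.ofReal_re] at h
    have := (abs_le.mp (h.trans hzx)).1
    linarith
  have hrδ : r * (1 + Real.sin θ) < Real.sin θ * x := by
    rw [div_mul_eq_mul_div, lt_div_iff₀ (by linarith)] at hr
    linarith [hr]
  have habsz : x - r ≤ ‖z‖ := by
    have h1 : ‖(x:ℂ)‖ - ‖(x:ℂ) - z‖ ≤ ‖z‖ := by
      have := norm_sub_norm_le (x:ℂ) ((x:ℂ) - z)
      simpa using this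
    have h2 : ‖(x:ℂ) - z‖ ≤ r := by
      rwa [show (x:ℂ) - z = -(z - (x:ℂ)) by ring, norm_neg]
    have h3 : ‖(x:ℂ)‖ = x := by
      rw [Complex.norm_real, Real.norm_eq_abs, abs_of_pos hx]
    linarith
  have hrx : r < x := by nlinarith
  have habspos : 0 < ‖z‖ := by linarith
  have hz0 : z ≠ 0 := by
    intro h0; rw [h0] at habspos; simp at habspos
  have himz : |z.im| < Real.sin θ * ‖z‖ := by
    have : r < Real.sin θ * (x - r) := by nlinarith
    calc |z.im| ≤ r := him
      _ < Real.sin θ * (x - r) := this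
      _ ≤ Real.sin θ * ‖z‖ := by nlinarith
  have hu1 : |z.im / ‖z‖| < Real.sin θ := by
    rw [abs_div, abs_of_pos habspos, div_lt_iff₀ habspos]
    linarith
  have humem : z.im / ‖z‖ ∈ Set.Icc (-1 : ℝ) 1 := by
    have := abs_lt.mp hu1
    constructor <;> nlinarith
  refine ⟨hz0, ?_⟩
  rw [Complex.arg_of_re_nonneg (by linarith), abs_lt]
  have hul := abs_lt.mp hu1
  constructor
  · exact (Real.lt_arcsin_iff_sin_lt ⟨by linarith, by linarith⟩ humem).mpr (by
      rw [Real.sin_neg]; linarith [hul.1])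
  · exact (Real.arcsin_lt_iff_lt_sin humem ⟨by linarith, by linarith⟩).mpr hul.2

lemma cauchy_iterated_deriv_bound {F : ℂ → ℂ} {c : ℂ} {R : NNReal} {M : ℝ} (hR : 0 < R)
    (hd : DifferentiableOn ℂ F (Metric.closedBall c R))
    (hM : ∀ z ∈ Metric.closedBall c (R : ℝ), ‖F z‖ ≤ M) (n : ℕ) :
    ‖deriv^[n] F c‖ ≤ (n.factorial : ℝ) * M * ((R : ℝ)⁻¹) ^ n := by
  have hRpos : (0 : ℝ) < R := hR
  have hM0 : 0 ≤ M := le_trans (norm_nonneg _) (hM c (Metric.mem_closedBall_self hRpos.le))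
  have hps := hd.hasFPowerSeriesOnBall hR
  have h2pi : (0 : ℝ) < 2 * π := Real.two_pi_pos
  set p := cauchyPowerSeries F c R with hp
  have h1 : deriv^[n] F c = iteratedDeriv n F c := by rw [iteratedDeriv_eq_iterate]
  rw [h1, iteratedDeriv_eq_iteratedFDeriv, ← hps.factorial_smul (1 : ℂ) n, nsmul_eq_mul,
    norm_mul]
  have hnorm_nat : ‖((n.factorial : ℕ) : ℂ)‖ = (n.factorial : ℝ) := by
    rw [Complex.norm_natCast]
  rw [hnorm_nat]
  have h3 : ‖p n fun _ => (1 : ℂ)‖ ≤ ‖p n‖ := by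
    simpa using (p n).le_opNorm fun _ => (1 : ℂ)
  have hcont : Continuous fun θ : ℝ => ‖F (circleMap c R θ)‖ :=
    (hd.continuousOn.comp_continuous (continuous_circleMap c R) fun θ =>
      circleMap_mem_closedBall c hRpos.le θ).norm
  have hint : ∫ θ in (0 : ℝ)..2 * π, ‖F (circleMap c R θ)‖ ≤ 2 * π * M := by
    have h := intervalIntegral.integral_mono_on h2pi.le (hcont.intervalIntegrable 0 (2 * π))
      (intervalIntegrable_const (μ := volume) (c := M))
      (fun θ _ => hM _ (circleMap_mem_closedBall c hRpos.le θ))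
    simpa using h
  have h4 : ‖p n‖ ≤ M * ((R : ℝ)⁻¹) ^ n := by
    refine le_trans (norm_cauchyPowerSeries_le F c R n) ?_
    rw [abs_of_nonneg R.coe_nonneg]
    have h5 : (2 * π)⁻¹ * (∫ θ in (0 : ℝ)..2 * π, ‖F (circleMap c R θ)‖) ≤ M := by
      rw [inv_mul_le_iff₀ h2pi]
      linarith
    exact mul_le_mul_of_nonneg_right h5 (by positivity)
  calc (n.factorial : ℝ) * ‖p n fun _ => (1 : ℂ)‖ ≤ (n.factorial : ℝ) * (M * ((R : ℝ)⁻¹) ^ n) := by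
        exact mul_le_mul_of_nonneg_left (h3.trans h4) (by positivity)
    _ = (n.factorial : ℝ) * M * ((R : ℝ)⁻¹) ^ n := by ring

lemma key_hormander (θ : ℝ) (hθ0 : 0 < θ) (hθ : θ < π / 2) (k : ℕ)
    (η : ℝ → ℂ) (hη : ContDiff ℝ (⊤ : ℕ∞) η) (hηc : HasCompactSupport η)
    (hηsupp : tsupport η ⊆ Set.Ioi (0 : ℝ)) :
    ∃ C : ℝ, 0 < C ∧
      ∀ M : ℝ, 0 ≤ M → ∀ F : ℂ → ℂ,
        (∀ z ∈ openSector θ, DifferentiableAt ℂ F z) →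
        (∀ z ∈ openSector θ, ‖F z‖ ≤ M) →
        ∀ j : ℕ, j ≤ k →
          ContDiff ℝ (k : ℕ∞) (fun s : ℝ => η s * F ((s : ℂ)))
          ∧ eLpNorm (iteratedDeriv j (fun s : ℝ => η s * F ((s : ℂ)))) 2 volume
              ≤ ENNReal.ofReal (C * M) := by
  have hπ := Real.pi_pos
  have hsθ : 0 < Real.sin θ := Real.sin_pos_of_pos_of_lt_pi hθ0 (by linarith)
  set δ : ℝ := Real.sin θ / (1 + Real.sin θ) with hδdef
  have hδ0 : 0 < δ := div_pos hsθ (by linarith)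
  by_cases hK : (tsupport η) = ∅
  · refine ⟨1, one_pos, ?_⟩
    intro M hM F hF hFb j hj
    have hη0 : ∀ s : ℝ, η s = 0 := fun s =>
      image_eq_zero_of_notMem_tsupport (by simp [hK])
    have hfun : (fun s : ℝ => η s * F ((s : ℂ))) = fun _ => 0 := by
      funext s; simp [hη0 s]
    rw [hfun]
    refine ⟨contDiff_const, ?_⟩
    have hzero : iteratedDeriv j (fun _ : ℝ => (0 : ℂ)) = fun _ => 0 := by
      funext x
      rw [iteratedDeriv_eq_iteratedFDeriv]
      simp [iteratedFDeriv_zero_fun]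
    rw [hzero]
    simp
  have hKne : (tsupport η).Nonempty := Set.nonempty_iff_ne_empty.mpr hK
  have hKc : IsCompact (tsupport η) := hηc
  set a : ℝ := sInf (tsupport η) with hadef
  have haK : a ∈ tsupport η := hKc.sInf_mem hKne
  have ha0 : 0 < a := hηsupp haK
  have haLe : ∀ s ∈ tsupport η, a ≤ s := fun s hs => csInf_le hKc.bddBelow hs
  set r : ℝ := δ * a / 2 with hrdef
  have hr0 : 0 < r := by positivity
  set R : NNReal := ⟨r, hr0.le⟩ with hRdef
  have hball : ∀ s : ℝ, a ≤ s → Metric.closedBall ((s : ℂ)) r ⊆ openSector θ := by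
    intro s hs
    refine closedBall_subset_openSector_s7 hθ0 hθ (by linarith) ?_
    have h1 : r < δ * a := by
      rw [hrdef]; linarith [mul_pos hδ0 ha0]
    have h2 : δ * a ≤ δ * s := by nlinarith
    linarith
  set U : Set ℂ := ⋃ s : Set.Ioi (0 : ℝ), Metric.ball (((s : ℝ) : ℂ)) (δ * s / 2) with hUdef
  have hUopen : IsOpen U := isOpen_iUnion fun _ => Metric.isOpen_ball
  have hUS : U ⊆ openSector θ := by
    intro z hz
    obtain ⟨s, hzs⟩ := Set.mem_iUnion.mp hz
    have hs0 : (0 : ℝ) < s := s.2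
    refine closedBall_subset_openSector_s7 hθ0 hθ hs0 ?_ (Metric.ball_subset_closedBall hzs)
    nlinarith [mul_pos hδ0 hs0]
  have hUmem : ∀ s : ℝ, 0 < s → ((s : ℂ)) ∈ U := fun s hs =>
    Set.mem_iUnion.mpr ⟨⟨s, hs⟩, Metric.mem_ball_self (by positivity)⟩
  -- bounds on derivatives of η
  have hAex : ∀ i : ℕ, ∃ A : ℝ, ∀ x : ℝ, ‖iteratedFDeriv ℝ i η x‖ ≤ A := by
    intro i
    obtain ⟨x0, hx0⟩ :=
      ((hη.continuous_iteratedFDeriv (m := i) (by exact_mod_cast le_top)).norm).exists_forall_ge_of_hasCompactSupport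
        ((hηc.iteratedFDeriv i).norm)
    exact ⟨‖iteratedFDeriv ℝ i η x0‖, hx0⟩
  choose A hA using hAex
  set A' : ℝ := ∑ i ∈ Finset.range (k + 1), |A i| with hA'def
  have hA'0 : 0 ≤ A' := Finset.sum_nonneg fun i _ => abs_nonneg _
  have hA' : ∀ i : ℕ, i ≤ k → ∀ x : ℝ, ‖iteratedFDeriv ℝ i η x‖ ≤ A' := by
    intro i hi x
    refine le_trans ((hA i x).trans (le_abs_self _)) ?_
    exact Finset.single_le_sum (fun m _ => abs_nonneg (A m)) (Finset.mem_range.mpr (by omega))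
  set B : ℝ := ∑ n ∈ Finset.range (k + 1), (n.factorial : ℝ) * (r⁻¹) ^ n with hBdef
  have hB0 : 0 ≤ B := Finset.sum_nonneg fun n _ => by positivity
  have hBn : ∀ n : ℕ, n ≤ k → (n.factorial : ℝ) * (r⁻¹) ^ n ≤ B := fun n hn =>
    Finset.single_le_sum (f := fun m => (m.factorial : ℝ) * (r⁻¹) ^ m)
      (fun m _ => by positivity) (Finset.mem_range.mpr (by omega))
  have hKfin : volume (tsupport η) < ⊤ := hKc.measure_lt_top
  have hWne : volume (tsupport η) ^ ((1 : ℝ) / 2) ≠ ⊤ :=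
    ENNReal.rpow_ne_top_of_nonneg (by norm_num) hKfin.ne
  set V : ℝ := (volume (tsupport η) ^ ((1 : ℝ) / 2)).toReal with hVdef
  have hV0 : 0 ≤ V := ENNReal.toReal_nonneg
  set D : ℝ := 2 ^ k * A' * B with hDdef
  have hD0 : 0 ≤ D := by rw [hDdef]; exact mul_nonneg (mul_nonneg (by positivity) hA'0) hB0
  refine ⟨D * V + 1, by nlinarith [mul_nonneg hD0 hV0], ?_⟩
  intro M hM F hF hFb j hj
  have hFU : AnalyticOnNhd ℂ F U :=
    DifferentiableOn.analyticOnNhd (fun z hz => (hF z (hUS hz)).differentiableWithinAt) hUopen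
  have hDn : ∀ n : ℕ, AnalyticOnNhd ℂ (deriv^[n] F) U := fun n => hFU.iterated_deriv n
  have hkeyD : ∀ n : ℕ, ∀ s : ℝ, 0 < s →
      iteratedDeriv n (fun u : ℝ => F ((u : ℂ))) s = deriv^[n] F ((s : ℂ)) := by
    intro n
    induction n with
    | zero => intro s hs; simp
    | succ n ih =>
      intro s hs
      have h1 : iteratedDeriv n (fun u : ℝ => F ((u : ℂ)))
          =ᶠ[nhds s] fun u : ℝ => deriv^[n] F ((u : ℂ)) :=
        Filter.eventuallyEq_of_mem (Ioi_mem_nhds hs) fun u hu => ih u hu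
      have h2 : HasDerivAt (deriv^[n] F) (deriv (deriv^[n] F) ((s : ℂ))) ((s : ℂ)) :=
        ((hDn n _ (hUmem s hs)).differentiableAt).hasDerivAt
      rw [iteratedDeriv_succ, h1.deriv_eq, h2.comp_ofReal.deriv,
        Function.iterate_succ_apply']
  have hhCAt : ∀ s : ℝ, 0 < s → ContDiffAt ℝ (k : ℕ∞) (fun u : ℝ => F ((u : ℂ))) s := by
    intro s hs
    have h1 : ContDiffAt ℂ (k : ℕ∞) F ((s : ℂ)) := (hFU _ (hUmem s hs)).contDiffAt
    have h2 : ContDiffAt ℝ (k : ℕ∞) F ((s : ℂ)) := h1.restrict_scalars ℝ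
    have h3 : ContDiffAt ℝ (k : ℕ∞) (fun u : ℝ => (u : ℂ)) s :=
      Complex.ofRealCLM.contDiff.contDiffAt
    exact h2.comp s h3
  have hhC : ContDiffOn ℝ (k : ℕ∞) (fun u : ℝ => F ((u : ℂ))) (Set.Ioi 0) :=
    fun s hs => (hhCAt s hs).contDiffWithinAt
  have hηk : ContDiff ℝ (k : ℕ∞) η := hη.of_le (by exact_mod_cast le_top)
  have hηC : ContDiffOn ℝ (k : ℕ∞) η (Set.Ioi (0 : ℝ)) := hηk.contDiffOn
  have hGC : ContDiff ℝ (k : ℕ∞) (fun s : ℝ => η s * F ((s : ℂ))) := by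
    rw [contDiff_iff_contDiffAt]
    intro s
    by_cases hs : s ∈ tsupport η
    · exact (hηk.contDiffAt).mul (hhCAt s (hηsupp hs))
    · have hev : (fun s : ℝ => η s * F ((s : ℂ))) =ᶠ[nhds s] fun _ => 0 :=
        Filter.eventuallyEq_of_mem ((isClosed_tsupport η).isOpen_compl.mem_nhds hs)
          fun u hu => by simp [image_eq_zero_of_notMem_tsupport hu]
      exact (contDiffAt_const (c := (0 : ℂ))).congr_of_eventuallyEq hev
  have hDnormBound : ∀ m : ℕ, m ≤ k → ∀ s : ℝ, s ∈ tsupport η →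
      ‖deriv^[m] F ((s : ℂ))‖ ≤ B * M := by
    intro m hm s hs
    have h1 : DifferentiableOn ℂ F (Metric.closedBall ((s : ℂ)) R) :=
      fun z hz => (hF z (hball s (haLe s hs) hz)).differentiableWithinAt
    have h2 : ∀ z ∈ Metric.closedBall ((s : ℂ)) (R : ℝ), ‖F z‖ ≤ M := fun z hz => by
      exact hFb z (hball s (haLe s hs) hz)
    have h3 := cauchy_iterated_deriv_bound (R := R) (by exact_mod_cast hr0) h1 h2 m
    calc ‖deriv^[m] F ((s : ℂ))‖ ≤ (m.factorial : ℝ) * M * (r⁻¹) ^ m := h3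
      _ = ((m.factorial : ℝ) * (r⁻¹) ^ m) * M := by ring
      _ ≤ B * M := mul_le_mul_of_nonneg_right (hBn m hm) hM
  have hpt : ∀ x : ℝ, ‖iteratedDeriv j (fun s : ℝ => η s * F ((s : ℂ))) x‖ ≤
      ‖(tsupport η).indicator (fun _ => D * M) x‖ := by
    intro x
    by_cases hx : x ∈ tsupport η
    · have hx0 : 0 < x := hηsupp hx
      rw [Set.indicator_of_mem hx]
      have e1 : ‖iteratedDeriv j (fun s : ℝ => η s * F ((s : ℂ))) x‖ =
          ‖iteratedFDerivWithin ℝ j (fun s : ℝ => η s * F ((s : ℂ))) (Set.Ioi 0) x‖ := by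
        rw [← norm_iteratedFDeriv_eq_norm_iteratedDeriv,
          iteratedFDerivWithin_of_isOpen (f := fun s : ℝ => η s * F ((s : ℂ))) j isOpen_Ioi hx0]
      rw [e1]
      have hmul := norm_iteratedFDerivWithin_mul_le (𝕜 := ℝ) hηC hhC
        isOpen_Ioi.uniqueDiffOn (Set.mem_Ioi.mpr hx0) (n := j) (by exact_mod_cast hj)
      refine le_trans hmul ?_
      have hterm : ∀ i ∈ Finset.range (j + 1),
          (j.choose i : ℝ) * ‖iteratedFDerivWithin ℝ i η (Set.Ioi 0) x‖ *
            ‖iteratedFDerivWithin ℝ (j - i) (fun u : ℝ => F ((u : ℂ))) (Set.Ioi 0) x‖ ≤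
          (j.choose i : ℝ) * (A' * (B * M)) := by
        intro i hi
        have hij : i ≤ j := Nat.lt_succ_iff.mp (Finset.mem_range.mp hi)
        have hik : i ≤ k := hij.trans hj
        have e2 : ‖iteratedFDerivWithin ℝ i η (Set.Ioi 0) x‖ ≤ A' := by
          rw [iteratedFDerivWithin_of_isOpen (f := η) i isOpen_Ioi hx0]
          exact hA' i hik x
        have e3 : ‖iteratedFDerivWithin ℝ (j - i) (fun u : ℝ => F ((u : ℂ))) (Set.Ioi 0) x‖
            ≤ B * M := by
          rw [iteratedFDerivWithin_of_isOpen (f := fun u : ℝ => F ((u : ℂ))) (j - i)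
              isOpen_Ioi hx0,
            norm_iteratedFDeriv_eq_norm_iteratedDeriv, hkeyD (j - i) x hx0]
          exact hDnormBound (j - i) (by omega) x hx
        have hc0 : (0 : ℝ) ≤ (j.choose i : ℝ) := Nat.cast_nonneg _
        calc (j.choose i : ℝ) * ‖iteratedFDerivWithin ℝ i η (Set.Ioi 0) x‖ *
              ‖iteratedFDerivWithin ℝ (j - i) (fun u : ℝ => F ((u : ℂ))) (Set.Ioi 0) x‖
            ≤ ((j.choose i : ℝ) * A') * (B * M) := by
              apply mul_le_mul (mul_le_mul_of_nonneg_left e2 hc0) e3 (norm_nonneg _)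
              positivity
          _ = (j.choose i : ℝ) * (A' * (B * M)) := by ring
      refine le_trans (Finset.sum_le_sum hterm) ?_
      rw [← Finset.sum_mul]
      have hsum : (∑ i ∈ Finset.range (j + 1), (j.choose i : ℝ)) = (2 : ℝ) ^ j := by
        rw [← Nat.cast_sum]
        rw [Nat.sum_range_choose]
        push_cast
        ring
      rw [hsum]
      have h2jk : (2 : ℝ) ^ j ≤ 2 ^ k := by
        apply pow_le_pow_right₀ (by norm_num) hj
      calc (2 : ℝ) ^ j * (A' * (B * M)) ≤ 2 ^ k * (A' * (B * M)) := by
            apply mul_le_mul_of_nonneg_right h2jk; positivity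
        _ = D * M := by rw [hDdef]; ring
        _ ≤ ‖D * M‖ := le_abs_self _
    · rw [Set.indicator_of_notMem hx]
      have hev : (fun s : ℝ => η s * F ((s : ℂ))) =ᶠ[nhds x] fun _ => (0 : ℂ) :=
        Filter.eventuallyEq_of_mem ((isClosed_tsupport η).isOpen_compl.mem_nhds hx)
          fun u hu => by simp [image_eq_zero_of_notMem_tsupport hu]
      rw [hev.iteratedDeriv_eq j]
      have hzero : iteratedDeriv j (fun _ : ℝ => (0 : ℂ)) x = 0 := by
        rw [iteratedDeriv_eq_iteratedFDeriv]; simp [iteratedFDeriv_zero_fun]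
      simp [hzero]
  refine ⟨hGC, ?_⟩
  have hKm : MeasurableSet (tsupport η) := (isClosed_tsupport η).measurableSet
  have e1 : ‖D * M‖ₑ = ENNReal.ofReal (D * M) := by
    rw [Real.enorm_eq_ofReal (mul_nonneg hD0 hM)]
  calc eLpNorm (iteratedDeriv j (fun s : ℝ => η s * F ((s : ℂ)))) 2 volume
      ≤ eLpNorm ((tsupport η).indicator fun _ => D * M) 2 volume := eLpNorm_mono hpt
    _ = ‖D * M‖ₑ * volume (tsupport η) ^ (1 / (2 : ℝ≥0∞).toReal) :=
        eLpNorm_indicator_const hKm (by norm_num) (by norm_num)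
    _ ≤ ENNReal.ofReal ((D * V + 1) * M) := by
        have e2 : (1 / (2 : ℝ≥0∞).toReal) = ((1 : ℝ) / 2) := by norm_num
        rw [e1, e2, ← ENNReal.ofReal_toReal hWne, ← hVdef,
          ← ENNReal.ofReal_mul (mul_nonneg hD0 hM)]
        apply ENNReal.ofReal_le_ofReal
        nlinarith

theorem hormander_condition_of_bounded_holomorphic
    (θ : ℝ) (hθ0 : 0 < θ) (hθ : θ < π / 2) (k : ℕ)
    (η : ℝ → ℂ) (hη : ContDiff ℝ (⊤ : ℕ∞) η) (hηc : HasCompactSupport η)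
    (hηsupp : tsupport η ⊆ Set.Ioi (0 : ℝ)) :
    ∃ C : ℝ, 0 < C ∧
      ∀ M : ℝ, 0 ≤ M → ∀ F : ℂ → ℂ,
        (∀ z ∈ openSector θ, DifferentiableAt ℂ F z) →
        (∀ z ∈ openSector θ, ‖F z‖ ≤ M) →
        ∀ t : ℝ, 0 < t → ∀ j : ℕ, j ≤ k →
          ContDiff ℝ (k : ℕ∞) (fun s : ℝ => η s * F (((t * s : ℝ) : ℂ)))
          ∧ eLpNorm (iteratedDeriv j (fun s : ℝ => η s * F (((t * s : ℝ) : ℂ)))) 2 volume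
              ≤ ENNReal.ofReal (C * M) := by
  obtain ⟨C, hC, hkey⟩ := key_hormander θ hθ0 hθ k η hη hηc hηsupp
  refine ⟨C, hC, ?_⟩
  intro M hM F hF hFb t ht j hj
  have htC : ((t : ℂ)) ≠ 0 := by exact_mod_cast ht.ne'
  have hmem : ∀ z ∈ openSector θ, ((t : ℂ) * z) ∈ openSector θ := by
    rintro z ⟨hz0, hzarg⟩
    exact ⟨mul_ne_zero htC hz0, by rwa [Complex.arg_real_mul z ht]⟩
  have h1 : ∀ z ∈ openSector θ, DifferentiableAt ℂ (fun w => F ((t : ℂ) * w)) z := fun z hz =>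
    (hF _ (hmem z hz)).comp z ((differentiableAt_id.const_mul ((t : ℂ))))
  have h2 : ∀ z ∈ openSector θ, ‖(fun w => F ((t : ℂ) * w)) z‖ ≤ M := fun z hz =>
    hFb _ (hmem z hz)
  have heq : (fun s : ℝ => η s * F (((t * s : ℝ) : ℂ))) =
      fun s : ℝ => η s * (fun w => F ((t : ℂ) * w)) ((s : ℂ)) := by
    funext s
    simp [Complex.ofReal_mul]
  rw [heq]
  exact hkey M hM (fun w => F ((t : ℂ) * w)) h1 h2 j hj
end
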